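/- For every integer i ≥ 0 one has c_4^{i+1} − c_3^i > 0, where c_3^i = (m*/D)·(k!/P(2k+1))·(P(k+i+1)/i!)·I(2k+2i+2, 2(k+1)l+2) and c_4^{i+1} = (l·m*/D)·((k+1)!/P(2k+1))·(P(k+i+1)/(i+1)!)·I(2k+2i+4, 2kl+2). -/

import Mathlib

/-- The critical value m* = ∏_{j=0}^{k} (2j+1)/(2jl+1). -/
noncomputable def mStar (l k : ℕ) : ℝ :=
  ∏ j ∈ Finset.range (k + 1), (2 * (j : ℝ) + 1) / (2 * (j : ℝ) * (l : ℝ) + 1)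

/-- D = 2(2k+1)l + 2. -/
noncomputable def Dd (l k : ℕ) : ℝ := 2 * (2 * (k : ℝ) + 1) * (l : ℝ) + 2

/-- P(i) = ∏_{j=0}^{i-1} (jl + 1), with P(0) = 1. -/
noncomputable def Pp (l i : ℕ) : ℝ := ∏ j ∈ Finset.range i, ((j : ℝ) * (l : ℝ) + 1)

/-- I(a,b) = (2/l^{(a+1)/2})·Γ((a+1)/2)·Γ((b+1)/(2l))/Γ((a+1)/2 + (b+1)/(2l)),
the value of ∫_0^Ω Sn^a Cs^b dθ for even a, b. -/
noncomputable def Ii (l a b : ℕ) : ℝ :=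
  2 / (l : ℝ) ^ (((a : ℝ) + 1) / 2) * Real.Gamma (((a : ℝ) + 1) / 2) *
    Real.Gamma (((b : ℝ) + 1) / (2 * (l : ℝ))) /
    Real.Gamma (((a : ℝ) + 1) / 2 + ((b : ℝ) + 1) / (2 * (l : ℝ)))

set_option maxHeartbeats 1600000 in
/-- Proposition 3.2 (ii): c₄^{i+1} − c₃ⁱ > 0. -/
theorem c4_sub_c3_pos (l k : ℕ) (hl : 2 ≤ l) (hk : 1 ≤ k) (i : ℕ) :
    0 < (l : ℝ) * mStar l k / Dd l k * ((Nat.factorial (k + 1) : ℝ) / Pp l (2 * k + 1)) *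
          (Pp l (k + i + 1) / (Nat.factorial (i + 1) : ℝ)) *
          Ii l (2 * k + 2 * i + 4) (2 * k * l + 2) -
        mStar l k / Dd l k * ((Nat.factorial k : ℝ) / Pp l (2 * k + 1)) *
          (Pp l (k + i + 1) / (Nat.factorial i : ℝ)) *
          Ii l (2 * k + 2 * i + 2) (2 * (k + 1) * l + 2) := by
  have hL : (2 : ℝ) ≤ (l : ℝ) := by exact_mod_cast hl
  have hL0 : (0 : ℝ) < (l : ℝ) := by linarith
  have hK : (1 : ℝ) ≤ (k : ℝ) := by exact_mod_cast hk
  have hI0 : (0 : ℝ) ≤ (i : ℝ) := Nat.cast_nonneg i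
  set L : ℝ := (l : ℝ)
  set K : ℝ := (k : ℝ)
  set I : ℝ := (i : ℝ)
  set s : ℝ := K + I + 3 / 2 with hs_def
  set t : ℝ := K + 3 / (2 * L) with ht_def
  have hs_pos : 0 < s := by positivity
  have ht_pos : 0 < t := by positivity
  have hst_pos : 0 < s + t := by linarith
  have hΓs : 0 < Real.Gamma s := Real.Gamma_pos_of_pos hs_pos
  have hΓt : 0 < Real.Gamma t := Real.Gamma_pos_of_pos ht_pos
  have hΓst : 0 < Real.Gamma (s + t) := Real.Gamma_pos_of_pos hst_pos
  have hLs : (0 : ℝ) < L ^ s := Real.rpow_pos_of_pos hL0 s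
  -- rewrite the two Ii values
  have hI1 : Ii l (2 * k + 2 * i + 4) (2 * k * l + 2)
      = 2 / (L ^ s * L) * (s * Real.Gamma s) * Real.Gamma t /
        ((s + t) * Real.Gamma (s + t)) := by
    unfold Ii
    have h1 : (((2 * k + 2 * i + 4 : ℕ) : ℝ) + 1) / 2 = s + 1 := by
      push_cast; simp only [hs_def]; ring
    have h2 : (((2 * k * l + 2 : ℕ) : ℝ) + 1) / (2 * L) = t := by
      push_cast; rw [ht_def]; field_simp; ring
    rw [h1, h2, Real.Gamma_add_one (ne_of_gt hs_pos),
      show s + 1 + t = (s + t) + 1 by ring,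
      Real.Gamma_add_one (ne_of_gt hst_pos),
      Real.rpow_add_one (ne_of_gt hL0)]
  have hI2 : Ii l (2 * k + 2 * i + 2) (2 * (k + 1) * l + 2)
      = 2 / L ^ s * Real.Gamma s * (t * Real.Gamma t) /
        ((s + t) * Real.Gamma (s + t)) := by
    unfold Ii
    have h1 : (((2 * k + 2 * i + 2 : ℕ) : ℝ) + 1) / 2 = s := by
      push_cast; simp only [hs_def]; ring
    have h2 : (((2 * (k + 1) * l + 2 : ℕ) : ℝ) + 1) / (2 * L) = t + 1 := by
      push_cast; rw [ht_def]; field_simp; ring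
    rw [h1, h2, Real.Gamma_add_one (ne_of_gt ht_pos),
      show s + (t + 1) = (s + t) + 1 by ring,
      Real.Gamma_add_one (ne_of_gt hst_pos)]
  have hm : 0 < mStar l k := by
    unfold mStar
    apply Finset.prod_pos
    intro j _
    have : (0:ℝ) ≤ (j:ℝ) := Nat.cast_nonneg j
    positivity
  have hD : 0 < Dd l k := by unfold Dd; positivity
  have hP1 : 0 < Pp l (2 * k + 1) := by
    unfold Pp; apply Finset.prod_pos; intro j _
    have : (0:ℝ) ≤ (j:ℝ) := Nat.cast_nonneg j
    positivity
  have hP2 : 0 < Pp l (k + i + 1) := by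
    unfold Pp; apply Finset.prod_pos; intro j _
    have : (0:ℝ) ≤ (j:ℝ) := Nat.cast_nonneg j
    positivity
  have hfk : 0 < (Nat.factorial k : ℝ) := by exact_mod_cast Nat.factorial_pos k
  have hfi : 0 < (Nat.factorial i : ℝ) := by exact_mod_cast Nat.factorial_pos i
  set G : ℝ := mStar l k / Dd l k * ((Nat.factorial k : ℝ) / Pp l (2 * k + 1)) *
      (Pp l (k + i + 1) / ((Nat.factorial i : ℝ) * (I + 1))) *
      (2 / L ^ s * Real.Gamma s * Real.Gamma t / ((s + t) * Real.Gamma (s + t))) with hG_def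
  have hG : 0 < G := by rw [hG_def]; positivity
  have hcastk : ((Nat.factorial (k + 1) : ℕ) : ℝ) = (K + 1) * (Nat.factorial k : ℝ) := by
    rw [Nat.factorial_succ]; push_cast; ring
  have hcasti : ((Nat.factorial (i + 1) : ℕ) : ℝ) = (I + 1) * (Nat.factorial i : ℝ) := by
    rw [Nat.factorial_succ]; push_cast; ring
  have key : (l : ℝ) * mStar l k / Dd l k * ((Nat.factorial (k + 1) : ℝ) / Pp l (2 * k + 1)) *
          (Pp l (k + i + 1) / (Nat.factorial (i + 1) : ℝ)) *
          Ii l (2 * k + 2 * i + 4) (2 * k * l + 2) -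
        mStar l k / Dd l k * ((Nat.factorial k : ℝ) / Pp l (2 * k + 1)) *
          (Pp l (k + i + 1) / (Nat.factorial i : ℝ)) *
          Ii l (2 * k + 2 * i + 2) (2 * (k + 1) * l + 2)
      = G * ((K + 1) * s - (I + 1) * t) := by
    rw [hI1, hI2, hcastk, hcasti, hG_def]
    have hIp1 : (0:ℝ) < I + 1 := by positivity
    field_simp
    ring
  rw [key]
  apply mul_pos hG
  have ht_le : 3 / (2 * L) ≤ 3 / 4 := by
    rw [div_le_div_iff₀ (by positivity) (by norm_num)]
    linarith
  have : (I + 1) * t ≤ (I + 1) * (K + 3 / 4) := by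
    apply mul_le_mul_of_nonneg_left _ (by linarith)
    rw [ht_def]; linarith
  have h2 : (I + 1) * (K + 3 / 4) < (K + 1) * s := by
    rw [hs_def]; nlinarith [mul_nonneg (le_trans zero_le_one hK) hI0]
  exact sub_pos.mpr (this.trans_lt h2)
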